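/- Let W = X₁ + ⋯ + X_n be a sum of independent random variables with positive finite variances. Let I₂ be a random index with P(I₂ = i) = Var(X_i)/Var(W) and set W^z = Σ_{j≠I₂} X_j + X_{I₂}^z where X_i^z is an independent zero-biased copy of X_i. Then W^z has the zero-biased distribution of W. -/

import Mathlib

open MeasureTheory ProbabilityTheory Real

noncomputable section

/-- `ν` is the size-biased distribution of `μ`: `E[V f(V)] = E[V] · E[f(V^s)]`
for all bounded measurable test functions `f`. -/
def IsSizeBiased (μ ν : Measure ℝ) : Prop :=
  ∀ f : ℝ → ℝ, Measurable f → (∀ x, |f x| ≤ 1) →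
    ∫ x, x * f x ∂μ = (∫ x, x ∂μ) * ∫ x, f x ∂ν

/-- `ν` is the zero-biased distribution of `μ`: `E[(W−μ) f(W)] = σ² · E[f'(W^z)]`
for all differentiable test functions `f` with bounded derivative. -/
def IsZeroBiased (μ ν : Measure ℝ) : Prop :=
  ∀ f : ℝ → ℝ, Differentiable ℝ f → (∀ x, |deriv f x| ≤ 1) →
    ∫ x, (x - ∫ y, y ∂μ) * f x ∂μ
      = (∫ x, (x - ∫ y, y ∂μ) ^ 2 ∂μ) * ∫ x, deriv f x ∂ν

lemma lip_of_deriv {f : ℝ → ℝ} (hf : Differentiable ℝ f) (hf' : ∀ x, |deriv f x| ≤ 1) :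
    LipschitzWith 1 f := by
  apply lipschitzWith_of_nnnorm_deriv_le hf
  intro x
  rw [← NNReal.coe_le_coe]
  simpa using hf' x

lemma growth_of_deriv {f : ℝ → ℝ} (hf : Differentiable ℝ f) (hf' : ∀ x, |deriv f x| ≤ 1) :
    ∀ x, |f x| ≤ |f 0| + |x| := by
  intro x
  have h := (lip_of_deriv hf hf').dist_le_mul x 0
  simp only [Real.dist_eq, NNReal.coe_one, one_mul, sub_zero] at h
  calc |f x| = |f 0 + (f x - f 0)| := by ring_nf
    _ ≤ |f 0| + |f x - f 0| := abs_add_le _ _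
    _ ≤ |f 0| + |x| := by linarith

lemma memL2_comp {Ω : Type*} [MeasurableSpace Ω] {P : Measure Ω} [IsProbabilityMeasure P]
    {f : ℝ → ℝ} (hf : Differentiable ℝ f) (hf' : ∀ x, |deriv f x| ≤ 1)
    {W : Ω → ℝ} (hW : Measurable W) (hW2 : MemLp W 2 P) :
    MemLp (fun ω => f (W ω)) 2 P := by
  have hg : MemLp (fun ω => |f 0| + ‖W ω‖) 2 P := (memLp_const (|f 0|)).add hW2.norm
  refine MemLp.of_le hg (hf.continuous.comp_aestronglyMeasurable hW.aestronglyMeasurable) ?_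
  filter_upwards with ω
  have := growth_of_deriv hf hf' (W ω)
  rw [Real.norm_eq_abs, Real.norm_eq_abs]
  calc |f (W ω)| ≤ |f 0| + |W ω| := this
    _ ≤ |(|f 0| + |W ω|)| := le_abs_self _

lemma integrable_L2_mul {Ω : Type*} [MeasurableSpace Ω] {P : Measure Ω}
    {g h : Ω → ℝ} (hg : MemLp g 2 P) (hh : MemLp h 2 P) :
    Integrable (fun ω => g ω * h ω) P := by
  have : MemLp (g • h) 1 P := MemLp.smul hh hg
  rw [← memLp_one_iff_integrable]
  exact this

lemma integral_conv_of_bdd {μ ν : Measure ℝ} [IsProbabilityMeasure μ] [IsProbabilityMeasure ν]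
    {g : ℝ → ℝ} (hg : Measurable g) (hb : ∀ x, |g x| ≤ 1) :
    ∫ x, g x ∂(Measure.conv μ ν) = ∫ w, ∫ x, g (w + x) ∂ν ∂μ := by
  rw [Measure.conv, integral_map (by fun_prop) hg.aestronglyMeasurable]
  have hint : Integrable (fun p : ℝ × ℝ => g (p.1 + p.2)) (μ.prod ν) := by
    refine (integrable_const (1 : ℝ)).mono' (hg.comp measurable_add).aestronglyMeasurable ?_
    filter_upwards with p
    simpa [Real.norm_eq_abs] using hb _
  exact integral_prod _ hint

lemma variance_eq_integral_map {Ω : Type*} [MeasurableSpace Ω] {P : Measure Ω}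
    [IsProbabilityMeasure P] {B : Ω → ℝ} (hB : Measurable B) (hB2 : MemLp B 2 P) :
    ∫ x, (x - ∫ y, y ∂(Measure.map B P)) ^ 2 ∂(Measure.map B P) = variance B P := by
  have hmean : ∫ y, y ∂(Measure.map B P) = ∫ ω, B ω ∂P :=
    integral_map hB.aemeasurable aestronglyMeasurable_id
  have hm : AEStronglyMeasurable (fun x : ℝ => (x - ∫ ω, B ω ∂P) ^ 2) (Measure.map B P) :=
    ((continuous_id.sub continuous_const).pow 2).aestronglyMeasurable
  rw [hmean, integral_map hB.aemeasurable hm, variance_eq_integral hB.aemeasurable]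

lemma step_coord {Ω : Type*} [MeasurableSpace Ω] {P : Measure Ω} [IsProbabilityMeasure P]
    {A B : Ω → ℝ} (hA : Measurable A) (hB : Measurable B)
    (hA2 : MemLp A 2 P) (hB2 : MemLp B 2 P) (hAB : IndepFun A B P)
    {ν : Measure ℝ} [IsProbabilityMeasure ν]
    (hν : IsZeroBiased (Measure.map B P) ν)
    {f : ℝ → ℝ} (hf : Differentiable ℝ f) (hf' : ∀ x, |deriv f x| ≤ 1) :
    ∫ ω, (B ω - ∫ ω', B ω' ∂P) * f (A ω + B ω) ∂P
      = variance B P * ∫ x, deriv f x ∂(Measure.conv (Measure.map A P) ν) := by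
  haveI : IsProbabilityMeasure (Measure.map A P) := Measure.isProbabilityMeasure_map hA.aemeasurable
  haveI : IsProbabilityMeasure (Measure.map B P) := Measure.isProbabilityMeasure_map hB.aemeasurable
  set μB : ℝ := ∫ ω', B ω' ∂P with hμB
  have hmean : ∫ y, y ∂(Measure.map B P) = μB :=
    integral_map hB.aemeasurable aestronglyMeasurable_id
  have hpair : Measure.map (fun ω => (A ω, B ω)) P
      = (Measure.map A P).prod (Measure.map B P) :=
    (indepFun_iff_map_prod_eq_prod_map_map hA.aemeasurable hB.aemeasurable).mp hAB
  set F : ℝ × ℝ → ℝ := fun p => (p.2 - μB) * f (p.1 + p.2) with hF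
  have hFmeas : Measurable F := by
    apply Measurable.mul
    · exact measurable_snd.sub measurable_const
    · exact (hf.continuous.measurable).comp measurable_add
  have hintP : Integrable (fun ω => (B ω - μB) * f (A ω + B ω)) P := by
    exact integrable_L2_mul (hB2.sub (memLp_const _))
      (memL2_comp hf hf' (hA.add hB) (hA2.add hB2))
  have hFint : Integrable F ((Measure.map A P).prod (Measure.map B P)) := by
    rw [← hpair, integrable_map_measure hFmeas.aestronglyMeasurable (by fun_prop)]
    exact hintP
  have h1 : ∫ ω, (B ω - μB) * f (A ω + B ω) ∂P
      = ∫ p, F p ∂((Measure.map A P).prod (Measure.map B P)) := by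
    rw [← hpair, integral_map (by fun_prop) hFmeas.aestronglyMeasurable]
  rw [h1, integral_prod _ hFint]
  have hinner : ∀ w : ℝ, ∫ x, F (w, x) ∂(Measure.map B P)
      = variance B P * ∫ x, deriv f (w + x) ∂ν := by
    intro w
    have hgdiff : Differentiable ℝ (fun x => f (w + x)) :=
      hf.comp ((differentiable_id).const_add w)
    have hgderiv : ∀ x, deriv (fun x => f (w + x)) x = deriv f (w + x) := fun x =>
      deriv_comp_const_add f w x
    have hvar : ∫ x, (x - μB) ^ 2 ∂(Measure.map B P) = variance B P := by
      rw [← hmean]; exact variance_eq_integral_map hB hB2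
    have hz := hν (fun x => f (w + x)) hgdiff (fun x => by rw [hgderiv]; exact hf' _)
    rw [hmean] at hz
    simp only [hgderiv] at hz
    rw [hvar] at hz
    simp only [hF]
    exact hz
  rw [integral_congr_ae (Filter.Eventually.of_forall hinner), integral_const_mul,
    integral_conv_of_bdd (measurable_deriv f) hf']

/-- Zero biasing a sum of independent random variables: replace a coordinate, chosen with
probability proportional to its variance, by an independent zero-biased copy. -/
theorem zeroBiased_sum_indep {Ω : Type*} [MeasurableSpace Ω] (P : Measure Ω)
    [IsProbabilityMeasure P] (n : ℕ) (X : Fin n → Ω → ℝ)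
    (hmeas : ∀ i, Measurable (X i))
    (hindep : iIndepFun X P)
    (hL2 : ∀ i, MemLp (X i) 2 P) (hvar : ∀ i, 0 < variance (X i) P)
    (ν : Fin n → Measure ℝ) (hνprob : ∀ i, IsProbabilityMeasure (ν i))
    (hν : ∀ i, IsZeroBiased (Measure.map (X i) P) (ν i)) :
    IsZeroBiased (Measure.map (fun ω => ∑ i, X i ω) P)
      (∑ i : Fin n,
        ENNReal.ofReal (variance (X i) P / variance (fun ω => ∑ j, X j ω) P) •
          (Measure.conv (Measure.map (fun ω => ∑ j ∈ Finset.univ.erase i, X j ω) P) (ν i))) := by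
  classical
  intro f hf hf'
  have hWmeas : Measurable (fun ω => ∑ i, X i ω) := by
    exact Finset.measurable_sum _ (fun i _ => hmeas i)
  set W : Ω → ℝ := fun ω => ∑ i, X i ω with hWdef
  have hWL2 : MemLp W 2 P := memLp_finsetSum Finset.univ (fun i _ => hL2 i)
  haveI : IsProbabilityMeasure (Measure.map W P) := Measure.isProbabilityMeasure_map hWmeas.aemeasurable
  haveI : ∀ i, IsProbabilityMeasure (ν i) := hνprob
  have hmean : ∫ y, y ∂(Measure.map W P) = ∫ ω, W ω ∂P :=
    integral_map hWmeas.aemeasurable aestronglyMeasurable_id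
  have hvarW : ∫ x, (x - ∫ y, y ∂(Measure.map W P)) ^ 2 ∂(Measure.map W P) = variance W P :=
    variance_eq_integral_map hWmeas hWL2
  -- split LHS into coordinates
  have hmulL2 : ∀ i : Fin n, Integrable (fun ω => (X i ω - ∫ ω', X i ω' ∂P) * f (W ω)) P :=
    fun i => integrable_L2_mul ((hL2 i).sub (memLp_const _)) (memL2_comp hf hf' hWmeas hWL2)
  have hLHS : ∫ x, (x - ∫ y, y ∂(Measure.map W P)) * f x ∂(Measure.map W P)
      = ∑ i, ∫ ω, (X i ω - ∫ ω', X i ω' ∂P) * f (W ω) ∂P := by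
    have hml : AEStronglyMeasurable (fun x : ℝ => (x - ∫ y, y ∂(Measure.map W P)) * f x)
        (Measure.map W P) :=
      ((continuous_id.sub continuous_const).mul hf.continuous).aestronglyMeasurable
    rw [integral_map hWmeas.aemeasurable hml, hmean]
    have hWm : ∫ ω, W ω ∂P = ∑ i, ∫ ω, X i ω ∂P := by
      simp only [hWdef]
      exact integral_finset_sum _ (fun i _ => (hL2 i).integrable one_le_two)
    have hsplit : ∀ ω, (W ω - ∫ ω', W ω' ∂P) * f (W ω)
        = ∑ i, (X i ω - ∫ ω', X i ω' ∂P) * f (W ω) := by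
      intro ω
      rw [← Finset.sum_mul, hWm]
      congr 1
      simp only [hWdef]
      rw [Finset.sum_sub_distrib]
    rw [integral_congr_ae (Filter.Eventually.of_forall hsplit)]
    exact integral_finset_sum _ (fun i _ => hmulL2 i)
  -- coordinates
  have hSmeas : ∀ i : Fin n, Measurable (fun ω => ∑ j ∈ Finset.univ.erase i, X j ω) :=
    fun i => Finset.measurable_sum _ (fun j _ => hmeas j)
  set S : Fin n → Ω → ℝ := fun i ω => ∑ j ∈ Finset.univ.erase i, X j ω with hSdef
  have hSL2 : ∀ i, MemLp (S i) 2 P := fun i => memLp_finsetSum _ (fun j _ => hL2 j)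
  have hindepSi : ∀ i, IndepFun (S i) (X i) P := by
    intro i
    have h := hindep.indepFun_finsetSum_of_notMem hmeas (Finset.notMem_erase i Finset.univ)
    have : S i = ∑ j ∈ Finset.univ.erase i, X j := by
      funext ω; simp [hSdef, Finset.sum_apply]
    rw [this]
    exact h
  haveI : ∀ i, IsProbabilityMeasure (Measure.map (S i) P) :=
    fun i => Measure.isProbabilityMeasure_map (hSmeas i).aemeasurable
  have hcoord : ∀ i : Fin n, ∫ ω, (X i ω - ∫ ω', X i ω' ∂P) * f (W ω) ∂P
      = variance (X i) P * ∫ x, deriv f x ∂(Measure.conv (Measure.map (S i) P) (ν i)) := by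
    intro i
    rw [← step_coord (hSmeas i) (hmeas i) (hSL2 i) (hL2 i) (hindepSi i) (hν i) hf hf']
    refine integral_congr_ae (Filter.Eventually.of_forall fun ω => ?_)
    simp only [hWdef, hSdef]
    rw [Finset.sum_erase_add Finset.univ (fun j => X j ω) (Finset.mem_univ i)]
  -- variance of the sum
  have hvarsum : variance W P = ∑ i, variance (X i) P := by
    have : W = ∑ i, X i := by funext ω; simp [hWdef, Finset.sum_apply]
    rw [this]
    exact IndepFun.variance_sum (fun i _ => hL2 i)
      (fun i _ j _ hij => hindep.indepFun hij)
  -- measure arithmetic on RHS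
  have hintconv : ∀ i : Fin n,
      Integrable (deriv f) (Measure.conv (Measure.map (S i) P) (ν i)) := by
    intro i
    refine (integrable_const (1 : ℝ)).mono' (measurable_deriv f).aestronglyMeasurable ?_
    filter_upwards with x
    simpa [Real.norm_eq_abs] using hf' x
  have hRHS : ∫ x, deriv f x ∂(∑ i : Fin n,
        ENNReal.ofReal (variance (X i) P / variance W P) •
          (Measure.conv (Measure.map (S i) P) (ν i)))
      = ∑ i : Fin n, (variance (X i) P / variance W P) *
          ∫ x, deriv f x ∂(Measure.conv (Measure.map (S i) P) (ν i)) := by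
    rw [integral_finset_sum_measure
      (fun i _ => (hintconv i).smul_measure ENNReal.ofReal_ne_top)]
    refine Finset.sum_congr rfl fun i _ => ?_
    rw [integral_smul_measure, ENNReal.toReal_ofReal
      (div_nonneg (variance_nonneg _ _) (variance_nonneg _ _))]
    rfl
  rw [hLHS, hvarW, hRHS, Finset.mul_sum]
  refine Finset.sum_congr rfl fun i _ => ?_
  rw [hcoord i, ← mul_assoc]
  congr 1
  have hσpos : 0 < variance W P := by
    rw [hvarsum]
    exact Finset.sum_pos (fun j _ => hvar j) ⟨i, Finset.mem_univ i⟩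
  field_simp
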